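/- Let ℓ ∈ (0,∞) and k ∈ K_ℓ, with K(s) = ∫₀ˢ k(θ) dθ. Then the function u ↦ k(1/u) belongs to NRV_{(ℓ−1)/ℓ} and the function u ↦ K(1/u) belongs to NRV_{−1/ℓ}; equivalently, K ∈ NRVZ_{1/ℓ} and k ∈ NRVZ_{(1−ℓ)/ℓ}. -/

import Mathlib

open Filter MeasureTheory Set Topology

noncomputable section

/-- `f` is normalized regularly varying at infinity of index `ρ`:
`f(u) = M* · u^ρ · exp (∫_b^u φ(t)/t dt)` for `u ≥ b`, with `M* > 0`, `φ`
continuous on `[b,∞)` and `φ(u) → 0` at infinity. -/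
def IsNRV (f : ℝ → ℝ) (ρ : ℝ) : Prop :=
  ∃ b : ℝ, 0 < b ∧ ∃ Mstar : ℝ, 0 < Mstar ∧ ∃ φ : ℝ → ℝ,
    ContinuousOn φ (Ici b) ∧ Tendsto φ atTop (𝓝 0) ∧
    ∀ u, b ≤ u → f u = Mstar * u ^ ρ * Real.exp (∫ t in b..u, φ t / t)

/-- `f` is normalized regularly varying at the origin of index `ρ`:
`u ↦ f(1/u)` is normalized regularly varying at infinity of index `-ρ`. -/
def IsNRVZ (f : ℝ → ℝ) (ρ : ℝ) : Prop := IsNRV (fun u => f (1 / u)) (-ρ)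

/-- `k ∈ K_ℓ`: `k` is a positive monotonic function in `C¹((0,μ)) ∩ L¹((0,μ))`
such that `(K/k)'(s) → ℓ` as `s → 0⁺`, where `K(s) = ∫₀ˢ k(θ) dθ`. -/
def memK (ℓ μ : ℝ) (k : ℝ → ℝ) : Prop :=
  (∀ s ∈ Ioo (0:ℝ) μ, 0 < k s) ∧
  (MonotoneOn k (Ioo (0:ℝ) μ) ∨ AntitoneOn k (Ioo (0:ℝ) μ)) ∧
  ContDiffOn ℝ 1 k (Ioo (0:ℝ) μ) ∧
  IntegrableOn k (Ioo (0:ℝ) μ) ∧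
  Tendsto (deriv fun s => (∫ θ in (0:ℝ)..s, k θ) / k s) (𝓝[>] (0:ℝ)) (𝓝 ℓ)

lemma isNRV_of_hasDerivAt (f : ℝ → ℝ) (ρ b : ℝ) (hb : 0 < b) (hfb : 0 < f b)
    (ψ : ℝ → ℝ) (hψc : ContinuousOn ψ (Ici b)) (hψt : Tendsto ψ atTop (𝓝 ρ))
    (hd : ∀ u ∈ Ici b, HasDerivAt f (f u * ψ u / u) u) : IsNRV f ρ := by
  set φ : ℝ → ℝ := fun t => ψ (max t b) - ρ with hφdef
  have hφc : Continuous φ := by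
    apply Continuous.sub _ continuous_const
    exact hψc.comp_continuous (continuous_id.max continuous_const) fun x => mem_Ici.mpr (le_max_right _ _)
  have hφt : Tendsto φ atTop (𝓝 0) := by
    have h1 : Tendsto (fun t => ψ t - ρ) atTop (𝓝 0) := by
      simpa using hψt.sub_const ρ
    refine h1.congr' ?_
    filter_upwards [eventually_ge_atTop b] with t ht
    simp [hφdef, max_eq_left ht]
  set F : ℝ → ℝ := fun u => ∫ t in b..u, φ t / t with hFdef
  have hGc : ContinuousOn (fun t => φ t / t) (Ioi 0) :=
    (hφc.continuousOn).div continuousOn_id fun x hx => ne_of_gt hx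
  have hFd : ∀ x ∈ Ici b, HasDerivAt F (φ x / x) x := by
    intro x hx
    have hx0 : (0:ℝ) < x := lt_of_lt_of_le hb hx
    refine intervalIntegral.integral_hasDerivAt_right ?_ ?_ ?_
    · refine (hGc.mono ?_).intervalIntegrable
      rw [uIcc_of_le hx]
      exact fun t ht => lt_of_lt_of_le hb ht.1
    · exact hGc.stronglyMeasurableAtFilter isOpen_Ioi x hx0
    · exact hGc.continuousAt (isOpen_Ioi.mem_nhds hx0)
  refine ⟨b, hb, f b * b ^ (-ρ), by positivity, φ, hφc.continuousOn, hφt, ?_⟩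
  intro u hu
  set H : ℝ → ℝ := fun x => f x * (x ^ (-ρ) * Real.exp (-(F x))) with hHdef
  have key : ∀ x ∈ Icc b u, H x = H b := by
    apply constant_of_has_deriv_right_zero
    · intro x hx
      have hx0 : (0:ℝ) < x := lt_of_lt_of_le hb hx.1
      exact ((hd x hx.1).continuousAt.mul
        (((Real.continuousAt_rpow_const x (-ρ) (Or.inl hx0.ne')).mul
          (((hFd x hx.1).continuousAt.neg).rexp)))).continuousWithinAt
    · intro x hx
      have hxb : b ≤ x := hx.1
      have hx0 : (0:ℝ) < x := lt_of_lt_of_le hb hxb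
      have h1 := hd x hxb
      have h2 : HasDerivAt (fun y : ℝ => y ^ (-ρ)) (-ρ * x ^ (-ρ - 1)) x :=
        Real.hasDerivAt_rpow_const (Or.inl hx0.ne')
      have h3 : HasDerivAt (fun y => Real.exp (-(F y))) (Real.exp (-(F x)) * -(φ x / x)) x := by
        simpa [mul_comm] using ((hFd x hxb).neg).exp
      have h4 := h1.mul (h2.mul h3)
      have heq : f x * ψ x / x * (x ^ (-ρ) * Real.exp (-(F x))) +
          f x * (-ρ * x ^ (-ρ - 1) * Real.exp (-(F x)) +
            x ^ (-ρ) * (Real.exp (-(F x)) * -(φ x / x))) = 0 := by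
        have hφx : φ x = ψ x - ρ := by simp [hφdef, max_eq_left hxb]
        have hpow : x ^ (-ρ - 1) = x ^ (-ρ) / x := by
          rw [Real.rpow_sub hx0, Real.rpow_one]
        rw [hφx, hpow]
        field_simp
        ring
      have : HasDerivWithinAt H 0 (Ici x) x := by
        have := h4.hasDerivWithinAt (s := Ici x)
        simp only [Pi.mul_apply] at this
        rw [heq] at this
        exact this
      exact this
  have hHb : H b = f b * b ^ (-ρ) := by
    simp [hHdef, hFdef, intervalIntegral.integral_same]
  have hHu := key u ⟨hu, le_rfl⟩
  rw [hHb] at hHu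
  have hu0 : (0:ℝ) < u := lt_of_lt_of_le hb hu
  have hup : (0:ℝ) < u ^ (-ρ) := Real.rpow_pos_of_pos hu0 _
  have hneg : u ^ (-ρ) = (u ^ ρ)⁻¹ := Real.rpow_neg hu0.le ρ
  have hexp : Real.exp (-(F u)) = (Real.exp (F u))⁻¹ := Real.exp_neg _
  rw [hHdef] at hHu
  simp only at hHu
  rw [hneg, hexp] at hHu
  have hpρ : (0:ℝ) < u ^ ρ := Real.rpow_pos_of_pos hu0 _
  calc f u = f u * ((u ^ ρ)⁻¹ * (Real.exp (F u))⁻¹) * (u ^ ρ * Real.exp (F u)) := by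
        field_simp
    _ = f b * b ^ (-ρ) * (u ^ ρ * Real.exp (F u)) := by rw [hHu]
    _ = f b * b ^ (-ρ) * u ^ ρ * Real.exp (F u) := by ring

/-- For `k ∈ K_ℓ` with `ℓ > 0`: `u ↦ k(1/u) ∈ NRV_{(ℓ-1)/ℓ}` and
`u ↦ K(1/u) ∈ NRV_{-1/ℓ}`; equivalently, `K ∈ NRVZ_{1/ℓ}` and `k ∈ NRVZ_{(1-ℓ)/ℓ}`. -/
theorem memK_normalized_regular_variation (ℓ μ : ℝ) (hℓ : 0 < ℓ) (hμ : 0 < μ)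
    (k : ℝ → ℝ) (hk : memK ℓ μ k) :
    IsNRV (fun u => k (1 / u)) ((ℓ - 1) / ℓ) ∧
    IsNRV (fun u => ∫ θ in (0:ℝ)..(1 / u), k θ) (-(1 / ℓ)) ∧
    IsNRVZ (fun s => ∫ θ in (0:ℝ)..s, k θ) (1 / ℓ) ∧
    IsNRVZ k ((1 - ℓ) / ℓ) := by
  obtain ⟨hkpos, -, hC1, hInt, htend⟩ := hk
  set K : ℝ → ℝ := fun s => ∫ θ in (0:ℝ)..s, k θ with hKdef
  set g : ℝ → ℝ := fun s => K s / k s with hgdef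
  have htend' : Tendsto (deriv g) (𝓝[>] (0:ℝ)) (𝓝 ℓ) := htend
  have hkne : ∀ s ∈ Ioo (0:ℝ) μ, k s ≠ 0 := fun s hs => (hkpos s hs).ne'
  have hkc : ContinuousOn k (Ioo (0:ℝ) μ) := hC1.continuousOn
  have hkd : ∀ s ∈ Ioo (0:ℝ) μ, HasDerivAt k (deriv k s) s := by
    intro s hs
    exact ((hC1.differentiableOn (by norm_num)).differentiableAt
      (isOpen_Ioo.mem_nhds hs)).hasDerivAt
  have hk'c : ContinuousOn (deriv k) (Ioo (0:ℝ) μ) :=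
    hC1.continuousOn_deriv_of_isOpen isOpen_Ioo (by norm_num)
  have hKint : ∀ s, 0 < s → s < μ → IntervalIntegrable k volume 0 s := by
    intro s h1 h2
    rw [intervalIntegrable_iff_integrableOn_Ioc_of_le h1.le]
    exact hInt.mono_set (fun θ hθ => ⟨hθ.1, lt_of_le_of_lt hθ.2 h2⟩)
  have hKd : ∀ s ∈ Ioo (0:ℝ) μ, HasDerivAt K (k s) s := fun s hs =>
    intervalIntegral.integral_hasDerivAt_right (hKint s hs.1 hs.2)
      (hkc.stronglyMeasurableAtFilter isOpen_Ioo s hs)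
      (hkc.continuousAt (isOpen_Ioo.mem_nhds hs))
  have hKc : ContinuousOn K (Ioo (0:ℝ) μ) := fun s hs =>
    (hKd s hs).continuousAt.continuousWithinAt
  have hKpos : ∀ s ∈ Ioo (0:ℝ) μ, 0 < K s := fun s hs =>
    intervalIntegral.intervalIntegral_pos_of_pos_on (hKint s hs.1 hs.2)
      (fun x hx => hkpos x ⟨hx.1, hx.2.trans hs.2⟩) hs.1
  have hK0 : Tendsto K (𝓝[>] (0:ℝ)) (𝓝 0) := by
    have h2 : (0:ℝ) < μ/2 := half_pos hμ
    have hci : ContinuousWithinAt K (Icc 0 (μ/2)) 0 := by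
      apply intervalIntegral.continuousWithinAt_primitive (measure_singleton 0)
      simp only [min_self, max_eq_right h2.le]  -- goal: IntervalIntegrable k volume (min 0 0) (max 0 (μ/2))
      exact hKint (μ/2) h2 (half_lt_self hμ)
    have hK00 : K 0 = 0 := intervalIntegral.integral_same
    have := hci.tendsto
    rw [hK00] at this
    have h3 : 𝓝[>] (0:ℝ) = 𝓝[Ioc (0:ℝ) (μ/2)] 0 := (nhdsWithin_Ioc_eq_nhdsGT h2).symm
    rw [h3]
    exact this.mono_left (nhdsWithin_mono 0 Ioc_subset_Icc_self)
  set D : ℝ → ℝ := fun s => (k s * k s - K s * deriv k s) / k s ^ 2 with hDdef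
  have hgd : ∀ s ∈ Ioo (0:ℝ) μ, HasDerivAt g (D s) s := fun s hs =>
    (hKd s hs).div (hkd s hs) (hkne s hs)
  have hDt : Tendsto D (𝓝[>] (0:ℝ)) (𝓝 ℓ) := by
    refine htend'.congr' ?_
    filter_upwards [Ioo_mem_nhdsGT hμ] with s hs
    exact (hgd s hs).deriv
  -- choose ε
  have hev : ∀ᶠ s in 𝓝[>] (0:ℝ), ℓ/2 < D s := hDt.eventually (eventually_gt_nhds (half_lt_self hℓ))
  obtain ⟨u₀, hu₀, hu₀sub⟩ := mem_nhdsGT_iff_exists_Ioo_subset.mp hev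
  set ε : ℝ := min u₀ μ with hεdef
  have hε0 : 0 < ε := lt_min hu₀ hμ
  have hεμ : ε ≤ μ := min_le_right _ _
  have hsub : Ioo (0:ℝ) ε ⊆ Ioo (0:ℝ) μ := fun s hs => ⟨hs.1, lt_of_lt_of_le hs.2 hεμ⟩
  have hDpos : ∀ s ∈ Ioo (0:ℝ) ε, 0 < D s := fun s hs =>
    lt_trans (half_pos hℓ) (hu₀sub ⟨hs.1, lt_of_lt_of_le hs.2 (min_le_left _ _)⟩)
  have hmon : MonotoneOn g (Ioo (0:ℝ) ε) := by
    have : StrictMonoOn g (Ioo (0:ℝ) ε) := by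
      apply strictMonoOn_of_deriv_pos (convex_Ioo _ _)
      · exact fun s hs => (hgd s (hsub hs)).continuousAt.continuousWithinAt
      · intro s hs
        rw [interior_Ioo] at hs
        rw [(hgd s (hsub hs)).deriv]
        exact hDpos s hs
    exact this.monotoneOn
  have hgpos : ∀ s ∈ Ioo (0:ℝ) μ, 0 < g s := fun s hs =>
    div_pos (hKpos s hs) (hkpos s hs)
  have hbdd : BddBelow (g '' Ioo (0:ℝ) ε) := by
    refine ⟨0, ?_⟩
    rintro y ⟨s, hs, rfl⟩
    exact (hgpos s (hsub hs)).le
  set c : ℝ := sInf (g '' Ioo (0:ℝ) ε) with hcdef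
  have hne : (Ioo (0:ℝ) ε).Nonempty := nonempty_Ioo.mpr hε0
  have hgc : Tendsto g (𝓝[>] (0:ℝ)) (𝓝 c) :=
    MonotoneOn.tendsto_nhdsWithin_Ioo_right hne hmon hbdd
  have hc0 : 0 ≤ c := le_csInf (hne.image _) (by rintro y ⟨s, hs, rfl⟩; exact (hgpos s (hsub hs)).le)
  have hcle : ∀ s ∈ Ioo (0:ℝ) ε, c ≤ g s := fun s hs => csInf_le hbdd (mem_image_of_mem _ hs)
  have hczero : c = 0 := by
    by_contra hc
    have hcpos : 0 < c := lt_of_le_of_ne hc0 (Ne.symm hc)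
    have hε2 : ε/2 ∈ Ioo (0:ℝ) ε := ⟨half_pos hε0, half_lt_self hε0⟩
    set m : ℝ := Real.exp (Real.log (K (ε/2)) - c⁻¹ * (ε/2)) with hmdef
    have hKlow : ∀ δ ∈ Ioo (0:ℝ) (ε/2), m ≤ K δ := by
      intro δ hδ
      have hδε : δ ∈ Ioo (0:ℝ) ε := ⟨hδ.1, hδ.2.trans (half_lt_self hε0)⟩
      have hsubδ : Icc δ (ε/2) ⊆ Ioo (0:ℝ) ε := fun x hx =>
        ⟨lt_of_lt_of_le hδ.1 hx.1, lt_of_le_of_lt hx.2 (half_lt_self hε0)⟩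
      have hbound : ‖Real.log (K (ε/2)) - Real.log (K δ)‖ ≤ c⁻¹ * ‖(ε/2) - δ‖ := by
        refine Convex.norm_image_sub_le_of_norm_hasDerivWithin_le
          (f := fun y => Real.log (K y)) (s := Icc δ (ε/2))
          (f' := fun x => (g x)⁻¹) ?_ ?_ (convex_Icc _ _) ?_ ?_
        · intro x hx
          have hxμ : x ∈ Ioo (0:ℝ) μ := hsub (hsubδ hx)
          have : HasDerivAt (fun y => Real.log (K y)) (k x / K x) x :=
            (hKd x hxμ).log (hKpos x hxμ).ne'
          have hgx : (g x)⁻¹ = k x / K x := by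
            rw [hgdef]; simp [inv_div]
          simpa [hgx] using this.hasDerivWithinAt
        · intro x hx
          have hxε := hsubδ hx
          have hgx : 0 < g x := hgpos x (hsub hxε)
          rw [Real.norm_eq_abs, abs_of_nonneg (inv_nonneg.mpr hgx.le)]
          exact inv_anti₀ hcpos (hcle x hxε)
        · exact ⟨le_rfl, hδ.2.le⟩
        · exact ⟨hδ.2.le, le_rfl⟩
      have h1 : Real.log (K (ε/2)) - Real.log (K δ) ≤ c⁻¹ * (ε/2 - δ) := by
        have := (abs_le.mp (by simpa [Real.norm_eq_abs, abs_of_nonneg (sub_nonneg.mpr hδ.2.le)]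
          using hbound)).2
        linarith [this]
      have h2 : Real.log (K (ε/2)) - c⁻¹ * (ε/2) ≤ Real.log (K δ) := by
        have hδpos : 0 < δ := hδ.1
        nlinarith [inv_nonneg.mpr hcpos.le, h1]
      calc m ≤ Real.exp (Real.log (K δ)) := Real.exp_le_exp.mpr h2
        _ = K δ := Real.exp_log (hKpos δ (hsub hδε))
    have : m ≤ 0 := by
      refine ge_of_tendsto hK0 ?_
      filter_upwards [Ioo_mem_nhdsGT (half_pos hε0)] with δ hδ
      exact hKlow δ hδ
    exact absurd this (not_le.mpr (Real.exp_pos _))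
  have hg0 : Tendsto g (𝓝[>] (0:ℝ)) (𝓝 0) := hczero ▸ hgc
  -- L'Hopital
  have hgs : Tendsto (fun s => g s / s) (𝓝[>] (0:ℝ)) (𝓝 ℓ) := by
    apply HasDerivAt.lhopital_zero_right_on_Ioo (a := 0) (b := ε) hε0
      (f' := D) (g' := fun _ => (1:ℝ))
    · exact fun x hx => hgd x (hsub hx)
    · exact fun x hx => hasDerivAt_id x
    · exact fun x hx => one_ne_zero
    · exact hg0
    · exact tendsto_id.mono_right nhdsWithin_le_nhds
    · simpa using hDt
  have hsg : Tendsto (fun s => s / g s) (𝓝[>] (0:ℝ)) (𝓝 ℓ⁻¹) := by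
    have h1 := hgs.inv₀ hℓ.ne'
    refine h1.congr fun s => ?_
    rw [inv_div]
  have hσ1 : Tendsto (fun s => -(s * k s / K s)) (𝓝[>] (0:ℝ)) (𝓝 (-ℓ⁻¹)) := by
    have heq : (fun s => s / g s) = fun s => s * k s / K s := by
      funext s; rw [hgdef]; exact div_div_eq_mul_div s (K s) (k s)
    exact (heq ▸ hsg).neg
  have hσ2 : Tendsto (fun s => -(s * deriv k s / k s)) (𝓝[>] (0:ℝ))
      (𝓝 (-(ℓ⁻¹ * (1 - ℓ)))) := by
    have hprod : Tendsto (fun s => (s / g s) * (1 - D s)) (𝓝[>] (0:ℝ))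
        (𝓝 (ℓ⁻¹ * (1 - ℓ))) := hsg.mul (tendsto_const_nhds.sub hDt)
    refine Tendsto.neg (hprod.congr' ?_)
    filter_upwards [Ioo_mem_nhdsGT hμ] with s hs
    have hk0 : k s ≠ 0 := hkne s hs
    have hK0' : K s ≠ 0 := (hKpos s hs).ne'
    have hs0 : s ≠ 0 := hs.1.ne'
    rw [hgdef, hDdef]
    field_simp
    ring
  set b : ℝ := 2/μ with hbdef
  have hb : 0 < b := by positivity
  have hmem : ∀ u, b ≤ u → 1/u ∈ Ioo (0:ℝ) μ := by
    intro u hu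
    have hu0 : 0 < u := lt_of_lt_of_le hb hu
    constructor
    · positivity
    · have h1 : 1/u ≤ 1/b := one_div_le_one_div_of_le hb hu
      have h2 : 1/b = μ/2 := by rw [hbdef]; rw [one_div_div]
      rw [h2] at h1
      linarith [half_lt_self hμ]
  have hmaps : MapsTo (fun u : ℝ => 1/u) (Ici b) (Ioo (0:ℝ) μ) := fun u hu => hmem u hu
  have hinvc : ContinuousOn (fun u : ℝ => 1/u) (Ici b) := by
    apply ContinuousOn.div continuousOn_const continuousOn_id
    intro u hu; exact (lt_of_lt_of_le hb hu).ne'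
  have hinvt : Tendsto (fun u : ℝ => 1/u) atTop (𝓝[>] (0:ℝ)) := by
    simpa [one_div] using tendsto_inv_atTop_nhdsGT_zero (𝕜 := ℝ)
  have hinvderiv : ∀ u : ℝ, 0 < u → HasDerivAt (fun u : ℝ => 1/u) (-(u^2)⁻¹) u := by
    intro u hu0
    simpa [one_div] using hasDerivAt_inv hu0.ne'
  have hKpart : IsNRV (fun u => K (1/u)) (-(1/ℓ)) := by
    refine isNRV_of_hasDerivAt _ _ b hb (hKpos _ (hmem b le_rfl))
      (fun u => -((1/u) * k (1/u) / K (1/u))) ?_ ?_ ?_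
    · exact ((hinvc.mul (hkc.comp hinvc hmaps)).div (hKc.comp hinvc hmaps)
        (fun u hu => (hKpos _ (hmem u hu)).ne')).neg
    · have := hσ1.comp hinvt
      simpa [Function.comp_def, one_div] using this
    · intro u hu
      have hu0 : 0 < u := lt_of_lt_of_le hb hu
      have hs := hmem u hu
      have hcomp : HasDerivAt (fun u : ℝ => K (1/u)) (k (1/u) * -(u^2)⁻¹) u :=
        (hKd (1/u) hs).comp u (hinvderiv u hu0)
      have hK' : K (1/u) ≠ 0 := (hKpos _ hs).ne'
      have hu' : u ≠ 0 := hu0.ne'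
      have heq : k (1/u) * -(u^2)⁻¹
          = K (1/u) * -((1/u) * k (1/u) / K (1/u)) / u := by
        field_simp
      rw [heq] at hcomp
      exact hcomp
  have hkpart : IsNRV (fun u => k (1/u)) (-(ℓ⁻¹ * (1 - ℓ))) := by
    refine isNRV_of_hasDerivAt _ _ b hb (hkpos _ (hmem b le_rfl))
      (fun u => -((1/u) * deriv k (1/u) / k (1/u))) ?_ ?_ ?_
    · exact ((hinvc.mul (hk'c.comp hinvc hmaps)).div (hkc.comp hinvc hmaps)
        (fun u hu => hkne _ (hmem u hu))).neg
    · have := hσ2.comp hinvt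
      simpa [Function.comp_def, one_div] using this
    · intro u hu
      have hu0 : 0 < u := lt_of_lt_of_le hb hu
      have hs := hmem u hu
      have hcomp : HasDerivAt (fun u : ℝ => k (1/u)) (deriv k (1/u) * -(u^2)⁻¹) u :=
        (hkd (1/u) hs).comp u (hinvderiv u hu0)
      have hk' : k (1/u) ≠ 0 := hkne _ hs
      have hu' : u ≠ 0 := hu0.ne'
      have heq : deriv k (1/u) * -(u^2)⁻¹
          = k (1/u) * -((1/u) * deriv k (1/u) / k (1/u)) / u := by
        field_simp
      rw [heq] at hcomp
      exact hcomp
  have hrho : -(ℓ⁻¹ * (1 - ℓ)) = (ℓ - 1) / ℓ := by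
    field_simp
    ring
  rw [hrho] at hkpart
  refine ⟨hkpart, hKpart, hKpart, ?_⟩
  show IsNRV (fun u => k (1/u)) (-((1 - ℓ)/ℓ))
  have h4 : -((1 - ℓ)/ℓ) = (ℓ - 1)/ℓ := by ring
  rw [h4]
  exact hkpart
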